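/- In the uniform example with a recommendation threshold q̄ ∈ (0,1) (R = risky iff M ≤ q̄), a decision-maker who observes H and R and minimizes expected recommendation-dependent loss ℓ* optimally takes A = risky iff H ≤ h̄(R), where h̄(risky) = (1-q̄) + q̄·c_I/(c_I+c_II) and h̄(safe) = (1-q̄)·c_I/(c_I+c_II+Δ_II). -/

import Mathlib

open MeasureTheory

/-- Loss: `y = true` is the bad outcome, `a = true` is the risky action. -/
noncomputable def lossFn (cI cII : ℝ) (y a : Bool) : ℝ :=
  (if y = false ∧ a = false then cI else 0) + (if y = true ∧ a = true then cII else 0)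

/-- Recommendation-dependent decision loss (Δ_I = 0): extra penalty Δ_II when the
risky action is taken against a safe recommendation and the bad outcome occurs.
`r = true` means the risky recommendation. -/
noncomputable def lossStar (cI cII ΔII : ℝ) (y a r : Bool) : ℝ :=
  lossFn cI cII y a + (if y = true ∧ a = true ∧ r = false then ΔII else 0)

open Set

set_option maxHeartbeats 1000000

section Aux

/-- integral of a step function over a set -/
lemma int_step (S : Set ℝ) (hfin : volume S ≠ ⊤) (t A B : ℝ) :
    ∫ m in S, (if t ≤ m then A else B) =
      B * (volume S).toReal + (A - B) * (volume (S ∩ Ici t)).toReal := by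
  have hfun : (fun m : ℝ => if t ≤ m then A else B)
      = fun m => B + (Ici t).indicator (fun _ => A - B) m := by
    funext m
    by_cases hm : t ≤ m
    · simp [hm, Set.indicator_of_mem, mem_Ici]
    · simp [hm, Set.indicator_of_notMem, mem_Ici]
  rw [hfun]
  have h1 : IntegrableOn (fun _ : ℝ => B) S := integrableOn_const hfin
  have h2 : IntegrableOn ((Ici t).indicator (fun _ => A - B)) S := by
    have hc : IntegrableOn (fun _ : ℝ => A - B) S := integrableOn_const hfin
    exact hc.indicator measurableSet_Ici
  rw [integral_add h1 h2, setIntegral_const, setIntegral_indicator measurableSet_Ici,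
    setIntegral_const]
  simp [smul_eq_mul, measureReal_def]; ring

lemma meas_decide {α} [MeasurableSpace α] {p : α → Prop} [DecidablePred p]
    (hp : MeasurableSet {x | p x}) : Measurable fun x => decide (p x) := by
  have : (fun x => decide (p x)) = fun x => if p x then true else false := by
    funext x; by_cases h : p x <;> simp [h]
  rw [this]; exact Measurable.ite hp measurable_const measurable_const

lemma meas_loss {α} [MeasurableSpace α] (cI cII ΔII : ℝ) {y b r : α → Bool}
    (hy : Measurable y) (hb : Measurable b) (hr : Measurable r) :
    Measurable fun x => lossStar cI cII ΔII (y x) (b x) (r x) := by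
  have h : Measurable (fun z : Bool × Bool × Bool => lossStar cI cII ΔII z.1 z.2.1 z.2.2) :=
    measurable_of_countable _
  exact h.comp (hy.prodMk (hb.prodMk hr))

lemma loss_abs {cI cII ΔII : ℝ} (hcI : 0 ≤ cI) (hcII : 0 ≤ cII) (hΔ : 0 ≤ ΔII) :
    ∀ y b r, |lossStar cI cII ΔII y b r| ≤ cI + cII + ΔII := by
  intro y b r
  cases y <;> cases b <;> cases r <;>
    simp [lossStar, lossFn, abs_le] <;> first
      | (constructor <;> linarith)
      | linarith

lemma loss_intOn {α} [MeasurableSpace α] (μ : Measure α) (S : Set α) (hfin : μ S ≠ ⊤)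
    {cI cII ΔII : ℝ} (hcI : 0 ≤ cI) (hcII : 0 ≤ cII) (hΔ : 0 ≤ ΔII)
    {y b r : α → Bool} (hy : Measurable y) (hb : Measurable b) (hr : Measurable r) :
    IntegrableOn (fun x => lossStar cI cII ΔII (y x) (b x) (r x)) S μ := by
  refine Integrable.mono' (g := fun _ => cI + cII + ΔII)
    (integrableOn_const hfin)
    ((meas_loss cI cII ΔII hy hb hr).aestronglyMeasurable) ?_
  exact ae_of_all _ fun x => loss_abs hcI hcII hΔ _ _ _

/-- lossStar as a step function of m -/
lemma loss_step (cI cII ΔII : ℝ) (b r : Bool) (h m : ℝ) :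
    lossStar cI cII ΔII (decide (1 ≤ h + m)) b r =
      if 1 - h ≤ m then (if b then (if r then cII else cII + ΔII) else 0)
      else (if b then 0 else cI) := by
  by_cases h1 : 1 - h ≤ m
  · have h2 : (1 : ℝ) ≤ h + m := by linarith
    cases b <;> cases r <;> simp [lossStar, lossFn, h2, h1]
  · have h2 : ¬ (1 : ℝ) ≤ h + m := by intro hc; exact h1 (by linarith)
    cases b <;> cases r <;> simp [lossStar, lossFn, h2, h1]

/-- pointwise (in h) optimality of the threshold rule -/
lemma pointwise_opt (cI cII ΔII q : ℝ) (hcI : 0 < cI) (hcII : 0 < cII) (hΔ : 0 ≤ ΔII)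
    (hq0 : 0 < q) (hq1 : q < 1) (hbar : Bool → ℝ)
    (hbarR : hbar true = (1 - q) + q * (cI / (cI + cII)))
    (hbarS : hbar false = (1 - q) * (cI / (cI + cII + ΔII)))
    (h : ℝ) (hh0 : 0 ≤ h) (hh1 : h ≤ 1) (g : Bool → Bool) :
    ∫ m in Icc (0:ℝ) 1, lossStar cI cII ΔII (decide (1 ≤ h + m))
        (decide (h ≤ hbar (decide (m ≤ q)))) (decide (m ≤ q))
      ≤ ∫ m in Icc (0:ℝ) 1, lossStar cI cII ΔII (decide (1 ≤ h + m))
        (g (decide (m ≤ q))) (decide (m ≤ q)) := by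
  have hD : (0:ℝ) < cI + cII := by linarith
  have hC : (0:ℝ) < cI + cII + ΔII := by linarith
  set w : ℝ := max (q - (1 - h)) 0 with hw
  set v : ℝ := 1 - max q (1 - h) with hv
  -- evaluation of the iterated integral for an arbitrary response g
  have eval : ∀ g : Bool → Bool,
      (∫ m in Icc (0:ℝ) 1, lossStar cI cII ΔII (decide (1 ≤ h + m))
        (g (decide (m ≤ q))) (decide (m ≤ q)))
      = (if g true then cII * w else cI * (q - w))
        + (if g false then (cII + ΔII) * v else cI * ((1 - q) - v)) := by
    intro g
    have hy : Measurable fun m : ℝ => decide (1 ≤ h + m) :=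
      meas_decide (measurableSet_le measurable_const (measurable_const.add measurable_id))
    have hr : Measurable fun m : ℝ => decide (m ≤ q) :=
      meas_decide (measurableSet_le measurable_id measurable_const)
    have hb : Measurable fun m : ℝ => g (decide (m ≤ q)) :=
      (measurable_of_countable g).comp hr
    have hfin1 : volume (Icc (0:ℝ) q) ≠ ⊤ := by
      rw [Real.volume_Icc]; exact ENNReal.ofReal_ne_top
    have hfin2 : volume (Ioc q (1:ℝ)) ≠ ⊤ := by
      rw [Real.volume_Ioc]; exact ENNReal.ofReal_ne_top
    have hint1 : IntegrableOn (fun m : ℝ => lossStar cI cII ΔII (decide (1 ≤ h + m))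
        (g (decide (m ≤ q))) (decide (m ≤ q))) (Icc 0 q) volume :=
      loss_intOn volume _ hfin1 hcI.le hcII.le hΔ hy hb hr
    have hint2 : IntegrableOn (fun m : ℝ => lossStar cI cII ΔII (decide (1 ≤ h + m))
        (g (decide (m ≤ q))) (decide (m ≤ q))) (Ioc q 1) volume :=
      loss_intOn volume _ hfin2 hcI.le hcII.le hΔ hy hb hr
    have hdisj : Disjoint (Icc (0:ℝ) q) (Ioc q 1) := by
      rw [Set.disjoint_left]
      intro m hm hm2
      exact absurd hm.2 (not_le.mpr hm2.1)
    have hsub : Icc (0:ℝ) 1 = Icc 0 q ∪ Ioc q 1 := (Icc_union_Ioc_eq_Icc hq0.le hq1.le).symm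
    rw [hsub, setIntegral_union hdisj measurableSet_Ioc hint1 hint2]
    have e1 : (∫ m in Icc (0:ℝ) q, lossStar cI cII ΔII (decide (1 ≤ h + m))
        (g (decide (m ≤ q))) (decide (m ≤ q)))
        = if g true then cII * w else cI * (q - w) := by
      have hcg : EqOn (fun m : ℝ => lossStar cI cII ΔII (decide (1 ≤ h + m))
          (g (decide (m ≤ q))) (decide (m ≤ q)))
          (fun m : ℝ => if 1 - h ≤ m then (if g true then cII else 0)
            else (if g true then 0 else cI)) (Icc 0 q) := by
        intro m hm
        have hmq : decide (m ≤ q) = true := decide_eq_true hm.2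
        simp only [hmq, loss_step cI cII ΔII (g true) true h m, if_true]
      rw [setIntegral_congr_fun measurableSet_Icc hcg, int_step _ hfin1]
      have hv1 : (volume (Icc (0:ℝ) q)).toReal = q := by
        rw [Real.volume_Icc, ENNReal.toReal_ofReal (by linarith)]; ring
      have hv2 : (volume (Icc (0:ℝ) q ∩ Ici (1 - h))).toReal = w := by
        have hset : Icc (0:ℝ) q ∩ Ici (1 - h) = Icc (1 - h) q := by
          ext m
          simp only [mem_inter_iff, mem_Icc, mem_Ici]
          constructor
          · rintro ⟨⟨_, h2⟩, h3⟩; exact ⟨h3, h2⟩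
          · rintro ⟨h1', h2⟩; exact ⟨⟨by linarith, h2⟩, h1'⟩
        rw [hset, Real.volume_Icc, ENNReal.toReal_ofReal', hw]
      rw [hv1, hv2]
      cases hgt : g true <;> simp <;> ring
    have e2 : (∫ m in Ioc q (1:ℝ), lossStar cI cII ΔII (decide (1 ≤ h + m))
        (g (decide (m ≤ q))) (decide (m ≤ q)))
        = if g false then (cII + ΔII) * v else cI * ((1 - q) - v) := by
      have hcg : EqOn (fun m : ℝ => lossStar cI cII ΔII (decide (1 ≤ h + m))
          (g (decide (m ≤ q))) (decide (m ≤ q)))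
          (fun m : ℝ => if 1 - h ≤ m then (if g false then cII + ΔII else 0)
            else (if g false then 0 else cI)) (Ioc q 1) := by
        intro m hm
        have hmq : decide (m ≤ q) = false := decide_eq_false (not_le.mpr hm.1)
        simp only [hmq, loss_step cI cII ΔII (g false) false h m, Bool.false_eq_true, if_false]
      rw [setIntegral_congr_fun measurableSet_Ioc hcg, int_step _ hfin2]
      have hv1 : (volume (Ioc q (1:ℝ))).toReal = 1 - q := by
        rw [Real.volume_Ioc, ENNReal.toReal_ofReal (by linarith)]
      have hv2 : (volume (Ioc q (1:ℝ) ∩ Ici (1 - h))).toReal = v := by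
        rcases le_or_gt (1 - h) q with hcase | hcase
        · have hset : Ioc q (1:ℝ) ∩ Ici (1 - h) = Ioc q 1 := by
            rw [Set.inter_eq_left]
            intro m hm
            exact le_trans hcase hm.1.le
          rw [hset, Real.volume_Ioc, ENNReal.toReal_ofReal (by linarith), hv,
            max_eq_left hcase]
        · have hset : Ioc q (1:ℝ) ∩ Ici (1 - h) = Icc (1 - h) 1 := by
            ext m
            simp only [mem_inter_iff, mem_Ioc, mem_Icc, mem_Ici]
            constructor
            · rintro ⟨⟨_, h2⟩, h3⟩; exact ⟨h3, h2⟩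
            · rintro ⟨h1', h2⟩; exact ⟨⟨lt_of_lt_of_le hcase h1', h2⟩, h1'⟩
          rw [hset, Real.volume_Icc, ENNReal.toReal_ofReal (by linarith), hv,
            max_eq_right hcase.le]
      rw [hv1, hv2]
      cases hgf : g false <;> simp <;> ring
    rw [e1, e2]
  -- optimality in the risky-recommendation region
  have keyT : ∀ b : Bool,
      (if decide (h ≤ hbar true) then cII * w else cI * (q - w))
        ≤ (if b then cII * w else cI * (q - w)) := by
    intro b
    by_cases hd : h ≤ hbar true
    · rw [decide_eq_true hd]
      cases b
      · simp only [if_true, Bool.false_eq_true, if_false]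
        have hkey : q * cII ≤ (1 - h) * (cI + cII) := by
          rw [hbarR] at hd
          have h3 : q * (cI / (cI + cII)) * (cI + cII) = q * cI := by field_simp
          nlinarith [mul_le_mul_of_nonneg_right hd hD.le]
        rcases le_or_gt (q - (1 - h)) 0 with hwc | hwc
        · rw [hw, max_eq_right hwc]
          simp only [mul_zero, sub_zero]
          positivity
        · rw [hw, max_eq_left hwc.le]
          nlinarith
      · exact le_refl _
    · rw [decide_eq_false hd]
      cases b
      · exact le_refl _
      · simp only [if_true, Bool.false_eq_true, if_false]
        push_neg at hd
        rw [hbarR] at hd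
        have hkey : (1 - h) * (cI + cII) < q * cII := by
          have h3 : q * (cI / (cI + cII)) * (cI + cII) = q * cI := by field_simp
          nlinarith [mul_lt_mul_of_pos_right hd hD]
        have h1h : 1 - h < q := by nlinarith
        rw [hw, max_eq_left (by linarith : (0:ℝ) ≤ q - (1 - h))]
        nlinarith
  -- optimality in the safe-recommendation region
  have keyF : ∀ b : Bool,
      (if decide (h ≤ hbar false) then (cII + ΔII) * v else cI * ((1 - q) - v))
        ≤ (if b then (cII + ΔII) * v else cI * ((1 - q) - v)) := by
    intro b
    by_cases hd : h ≤ hbar false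
    · rw [decide_eq_true hd]
      cases b
      · simp only [if_true, Bool.false_eq_true, if_false]
        rw [hbarS] at hd
        have hlt : (1 - q) * (cI / (cI + cII + ΔII)) < 1 - q := by
          have : cI / (cI + cII + ΔII) < 1 := by
            rw [div_lt_one hC]; linarith
          nlinarith
        have hhq : 1 - h > q := by linarith
        have hvv : v = h := by
          rw [hv, max_eq_right hhq.le]; ring
        rw [hvv]
        have hkey : h * (cI + cII + ΔII) ≤ (1 - q) * cI := by
          have h3 : (1 - q) * (cI / (cI + cII + ΔII)) * (cI + cII + ΔII) = (1 - q) * cI := by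
            field_simp
          nlinarith [mul_le_mul_of_nonneg_right hd hC.le]
        nlinarith
      · exact le_refl _
    · rw [decide_eq_false hd]
      cases b
      · exact le_refl _
      · simp only [if_true, Bool.false_eq_true, if_false]
        push_neg at hd
        rw [hbarS] at hd
        rcases le_or_gt (1 - h) q with hcase | hcase
        · have hvv : v = 1 - q := by rw [hv, max_eq_left hcase]
          rw [hvv]
          have : cI ≤ cI + cII + ΔII := by linarith
          nlinarith
        · have hvv : v = h := by rw [hv, max_eq_right hcase.le]; ring
          rw [hvv]
          have hkey : (1 - q) * cI < h * (cI + cII + ΔII) := by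
            have h3 : (1 - q) * (cI / (cI + cII + ΔII)) * (cI + cII + ΔII) = (1 - q) * cI := by
              field_simp
            nlinarith [mul_lt_mul_of_pos_right hd hC]
          nlinarith
  calc (∫ m in Icc (0:ℝ) 1, lossStar cI cII ΔII (decide (1 ≤ h + m))
        (decide (h ≤ hbar (decide (m ≤ q)))) (decide (m ≤ q)))
      = (if decide (h ≤ hbar true) then cII * w else cI * (q - w))
        + (if decide (h ≤ hbar false) then (cII + ΔII) * v else cI * ((1 - q) - v)) :=
        eval (fun r => decide (h ≤ hbar r))
    _ ≤ (if g true then cII * w else cI * (q - w))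
        + (if g false then (cII + ΔII) * v else cI * ((1 - q) - v)) :=
        add_le_add (keyT (g true)) (keyF (g false))
    _ = _ := (eval g).symm

end Aux

/-- With recommendation R = risky iff M ≤ q̄, the decision-maker
minimizing expected recommendation-dependent loss optimally takes risky iff
H ≤ h̄(R), with h̄(risky) = (1-q̄) + q̄·cI/(cI+cII) and
h̄(safe) = (1-q̄)·cI/(cI+cII+Δ_II). -/
theorem recommendation_dependent_response_optimal
    (cI cII ΔII q : ℝ) (hcI : 0 < cI) (hcII : 0 < cII) (hΔ : 0 ≤ ΔII)
    (hq : q ∈ Set.Ioo (0:ℝ) 1)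
    (hbar : Bool → ℝ)
    (hbarR : hbar true = (1 - q) + q * (cI / (cI + cII)))
    (hbarS : hbar false = (1 - q) * (cI / (cI + cII + ΔII)))
    (a : ℝ → Bool → Bool) (ha : Measurable fun p : ℝ × Bool => a p.1 p.2) :
    ∫ p in Set.Icc (0:ℝ) 1 ×ˢ Set.Icc (0:ℝ) 1,
        lossStar cI cII ΔII (decide (1 ≤ p.1 + p.2))
          (decide (p.1 ≤ hbar (decide (p.2 ≤ q)))) (decide (p.2 ≤ q))
      ≤ ∫ p in Set.Icc (0:ℝ) 1 ×ˢ Set.Icc (0:ℝ) 1,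
        lossStar cI cII ΔII (decide (1 ≤ p.1 + p.2))
          (a p.1 (decide (p.2 ≤ q))) (decide (p.2 ≤ q)) := by
  obtain ⟨hq0, hq1⟩ := hq
  -- measurability of the various Bool-valued maps on the product space
  have hr2 : Measurable fun p : ℝ × ℝ => decide (p.2 ≤ q) :=
    meas_decide (measurableSet_le measurable_snd measurable_const)
  have hy2 : Measurable fun p : ℝ × ℝ => decide (1 ≤ p.1 + p.2) :=
    meas_decide (measurableSet_le measurable_const (measurable_fst.add measurable_snd))
  have hb2L : Measurable fun p : ℝ × ℝ => decide (p.1 ≤ hbar (decide (p.2 ≤ q))) := by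
    have hrw : (fun p : ℝ × ℝ => decide (p.1 ≤ hbar (decide (p.2 ≤ q))))
        = fun p => if p.2 ≤ q then decide (p.1 ≤ hbar true) else decide (p.1 ≤ hbar false) := by
      funext p; by_cases hp : p.2 ≤ q <;> simp [hp]
    rw [hrw]
    exact Measurable.ite (measurableSet_le measurable_snd measurable_const)
      ((meas_decide (measurableSet_le measurable_id measurable_const)).comp measurable_fst)
      ((meas_decide (measurableSet_le measurable_id measurable_const)).comp measurable_fst)
  have hb2R : Measurable fun p : ℝ × ℝ => a p.1 (decide (p.2 ≤ q)) :=
    ha.comp (measurable_fst.prodMk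
      ((meas_decide (measurableSet_le measurable_id measurable_const)).comp measurable_snd))
  -- finiteness of the volume of the unit square
  have hfin : volume (Icc (0:ℝ) 1 ×ˢ Icc (0:ℝ) 1) ≠ ⊤ := by
    rw [Measure.volume_eq_prod, Measure.prod_prod, Real.volume_Icc]
    exact ENNReal.mul_ne_top ENNReal.ofReal_ne_top ENNReal.ofReal_ne_top
  -- integrability of both integrands on the square
  have hIntL : IntegrableOn (fun p : ℝ × ℝ => lossStar cI cII ΔII (decide (1 ≤ p.1 + p.2))
      (decide (p.1 ≤ hbar (decide (p.2 ≤ q)))) (decide (p.2 ≤ q)))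
      (Icc (0:ℝ) 1 ×ˢ Icc (0:ℝ) 1) volume :=
    loss_intOn volume _ hfin hcI.le hcII.le hΔ hy2 hb2L hr2
  have hIntR : IntegrableOn (fun p : ℝ × ℝ => lossStar cI cII ΔII (decide (1 ≤ p.1 + p.2))
      (a p.1 (decide (p.2 ≤ q))) (decide (p.2 ≤ q)))
      (Icc (0:ℝ) 1 ×ˢ Icc (0:ℝ) 1) volume :=
    loss_intOn volume _ hfin hcI.le hcII.le hΔ hy2 hb2R hr2
  -- Fubini
  have fub : ∀ F : ℝ × ℝ → ℝ, IntegrableOn F (Icc (0:ℝ) 1 ×ˢ Icc (0:ℝ) 1) volume →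
      (∫ p in Icc (0:ℝ) 1 ×ˢ Icc (0:ℝ) 1, F p)
        = ∫ x in Icc (0:ℝ) 1, ∫ m in Icc (0:ℝ) 1, F (x, m) := by
    intro F hF
    rw [Measure.volume_eq_prod] at hF ⊢
    exact setIntegral_prod F hF
  have hprodL : Integrable (fun p : ℝ × ℝ => lossStar cI cII ΔII (decide (1 ≤ p.1 + p.2))
      (decide (p.1 ≤ hbar (decide (p.2 ≤ q)))) (decide (p.2 ≤ q)))
      ((volume.restrict (Icc (0:ℝ) 1)).prod (volume.restrict (Icc (0:ℝ) 1))) := by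
    rw [Measure.prod_restrict]
    rw [Measure.volume_eq_prod] at hIntL
    exact hIntL
  have hprodR : Integrable (fun p : ℝ × ℝ => lossStar cI cII ΔII (decide (1 ≤ p.1 + p.2))
      (a p.1 (decide (p.2 ≤ q))) (decide (p.2 ≤ q)))
      ((volume.restrict (Icc (0:ℝ) 1)).prod (volume.restrict (Icc (0:ℝ) 1))) := by
    rw [Measure.prod_restrict]
    rw [Measure.volume_eq_prod] at hIntR
    exact hIntR
  rw [fub _ hIntL, fub _ hIntR]
  refine setIntegral_mono_on hprodL.integral_prod_left hprodR.integral_prod_left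
    measurableSet_Icc ?_
  intro x hx
  exact pointwise_opt cI cII ΔII q hcI hcII hΔ hq0 hq1 hbar hbarR hbarS x hx.1 hx.2 (a x)
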